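/- arXiv:1905.08322 — 6 statements merged into one kernel-verified Lean document; each statement's English description precedes it below -/
import Mathlib

section
/- Necessity of the relaxation constraints: Let μ be any probability measure on {0,1}^L and define the block matrix M(μ) ∈ ℝ^{2L×2L} with 2×2 blocks M(μ)_pp = diag(μ_p^(1)) and M(μ)_pq = μ_pq^(2) for p ≠ q. Then M(μ) is symmetric positive semidefinite, every off-diagonal block M(μ)_pq is entrywise nonnegative, and M(μ)_pq 1₂ = μ_p^(1) for all p ≠ q. In particular, if μ ∈ Π(ρ) then M(μ) is feasible for the primal 2-marginal SDP associated with ρ. -/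
open Matrix BigOperators

noncomputable section

abbrev Idx (L : ℕ) := Fin L × Fin 2

/-- The fixed 1-marginal `μ_p^(1) = (1 - ρ_p, ρ_p)ᵀ`. -/
def mu1 {L : ℕ} (ρ : Fin L → ℝ) (p : Fin L) (t : Fin 2) : ℝ :=
  if t = 0 then 1 - ρ p else ρ p

/-- The 1-marginal of a (signed) measure `μ` on `{0,1}^L`. -/
def marg1 {L : ℕ} (μ : (Fin L → Fin 2) → ℝ) (p : Fin L) (t : Fin 2) : ℝ :=
  ∑ s : Fin L → Fin 2, if s p = t then μ s else 0

/-- The 2-marginal of a (signed) measure `μ` on `{0,1}^L`. -/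
def marg2 {L : ℕ} (μ : (Fin L → Fin 2) → ℝ) (p q : Fin L) (t u : Fin 2) : ℝ :=
  ∑ s : Fin L → Fin 2, if s p = t ∧ s q = u then μ s else 0

/-- The block matrix `M(μ)` with diagonal blocks `diag(μ_p^(1))` and off-diagonal
blocks `μ_pq^(2)`. -/
def momentMatrix {L : ℕ} (μ : (Fin L → Fin 2) → ℝ) : Matrix (Idx L) (Idx L) ℝ :=
  fun a b =>
    if a.1 = b.1 then (if a.2 = b.2 then marg1 μ a.1 a.2 else 0)
    else marg2 μ a.1 b.1 a.2 b.2

/-- Feasibility for the primal 2-marginal SDP. -/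
def PrimalFeasible {L : ℕ} (ρ : Fin L → ℝ) (M : Matrix (Idx L) (Idx L) ℝ) : Prop :=
  M.PosSemidef ∧
  (∀ p q : Fin L, p ≠ q → ∀ t u : Fin 2, 0 ≤ M (p, t) (q, u)) ∧
  (∀ p q : Fin L, p ≠ q → ∀ t : Fin 2, ∑ u : Fin 2, M (p, t) (q, u) = mu1 ρ p t) ∧
  (∀ p : Fin L, ∀ t u : Fin 2, M (p, t) (p, u) = if t = u then mu1 ρ p t else 0)

/-- Indicator vector of a configuration `s`. -/
def indVec {L : ℕ} (s : Fin L → Fin 2) (a : Idx L) : ℝ :=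
  if s a.1 = a.2 then 1 else 0

lemma momentMatrix_eq {L : ℕ} (μ : (Fin L → Fin 2) → ℝ) (a b : Idx L) :
    momentMatrix μ a b = ∑ s : Fin L → Fin 2, μ s * (indVec s a * indVec s b) := by
  unfold momentMatrix marg1 marg2 indVec
  by_cases h : a.1 = b.1
  · by_cases h2 : a.2 = b.2
    · simp only [h, h2, if_true]
      refine Finset.sum_congr rfl fun s _ => ?_
      by_cases hs : s b.1 = b.2 <;> simp [hs, h, h2]
    · rw [if_pos h, if_neg h2]
      refine (Finset.sum_eq_zero fun s _ => ?_).symm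
      by_cases h1 : s a.1 = a.2
      · have h3 : ¬ s b.1 = b.2 := by rw [← h, h1]; exact h2
        simp only [if_pos h1, if_neg h3, one_mul, mul_zero]
      · simp only [if_neg h1, zero_mul, mul_zero]
  · simp only [h, if_false]
    refine Finset.sum_congr rfl fun s _ => ?_
    by_cases h1 : s a.1 = a.2 <;> by_cases h2 : s b.1 = b.2 <;> simp [h1, h2]

lemma marg2_row_sum {L : ℕ} (μ : (Fin L → Fin 2) → ℝ) (p q : Fin L) (t : Fin 2) :
    ∑ u : Fin 2, marg2 μ p q t u = marg1 μ p t := by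
  unfold marg2 marg1
  rw [Finset.sum_comm]
  refine Finset.sum_congr rfl fun s _ => ?_
  by_cases h : s p = t
  · simp only [h, true_and, if_pos]
    rw [Finset.sum_ite_eq (Finset.univ) (s q) (fun _ => μ s)]
    simp
  · simp [h]

lemma marg2_nonneg {L : ℕ} (μ : (Fin L → Fin 2) → ℝ) (hpos : ∀ s, 0 ≤ μ s)
    (p q : Fin L) (t u : Fin 2) : 0 ≤ marg2 μ p q t u := by
  unfold marg2
  refine Finset.sum_nonneg fun s _ => ?_
  split
  · exact hpos s
  · exact le_rfl

/-- Necessity of the relaxation constraints: for any probability measure `μ` on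
`{0,1}^L`, the moment matrix `M(μ)` is positive semidefinite, has entrywise
nonnegative off-diagonal blocks, its off-diagonal blocks have row sums `μ_p^(1)`;
and if `μ ∈ Π(ρ)` then `M(μ)` is feasible for the primal 2-marginal SDP. -/
theorem moment_matrix_necessary (L : ℕ) (hL : 2 ≤ L)
    (μ : (Fin L → Fin 2) → ℝ) (hpos : ∀ s, 0 ≤ μ s)
    (hsum : ∑ s : Fin L → Fin 2, μ s = 1) :
    (momentMatrix μ).PosSemidef ∧
    (∀ p q : Fin L, p ≠ q → ∀ t u : Fin 2, 0 ≤ momentMatrix μ (p, t) (q, u)) ∧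
    (∀ p q : Fin L, p ≠ q → ∀ t : Fin 2,
        ∑ u : Fin 2, momentMatrix μ (p, t) (q, u) = marg1 μ p t) ∧
    (∀ ρ : Fin L → ℝ, (∀ p, 0 ≤ ρ p ∧ ρ p ≤ 1) →
        (∀ p t, marg1 μ p t = mu1 ρ p t) →
        PrimalFeasible ρ (momentMatrix μ)) := by
  have hpsd : (momentMatrix μ).PosSemidef := by
    rw [Matrix.posSemidef_iff_dotProduct_mulVec]
    constructor
    · ext a b
      simp only [Matrix.conjTranspose_apply, star_trivial, momentMatrix_eq]
      refine Finset.sum_congr rfl fun s _ => by ring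
    · intro x
      have expand : (star x) ⬝ᵥ ((momentMatrix μ) *ᵥ x) =
          ∑ a : Idx L, ∑ b : Idx L, ∑ s : Fin L → Fin 2,
            μ s * ((x a * indVec s a) * (x b * indVec s b)) := by
        simp only [dotProduct, Matrix.mulVec, star_trivial,
          Pi.star_apply, momentMatrix_eq, Finset.sum_mul, Finset.mul_sum]
        refine Finset.sum_congr rfl fun a _ => Finset.sum_congr rfl fun b _ =>
          Finset.sum_congr rfl fun s _ => by ring
      have swap1 : (∑ a : Idx L, ∑ b : Idx L, ∑ s : Fin L → Fin 2,
            μ s * ((x a * indVec s a) * (x b * indVec s b)))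
          = ∑ s : Fin L → Fin 2, ∑ a : Idx L, ∑ b : Idx L,
            μ s * ((x a * indVec s a) * (x b * indVec s b)) := by
        calc (∑ a : Idx L, ∑ b : Idx L, ∑ s : Fin L → Fin 2,
              μ s * ((x a * indVec s a) * (x b * indVec s b)))
            = ∑ a : Idx L, ∑ s : Fin L → Fin 2, ∑ b : Idx L,
              μ s * ((x a * indVec s a) * (x b * indVec s b)) :=
              Finset.sum_congr rfl fun a _ => Finset.sum_comm
          _ = ∑ s : Fin L → Fin 2, ∑ a : Idx L, ∑ b : Idx L,
              μ s * ((x a * indVec s a) * (x b * indVec s b)) := Finset.sum_comm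
      have final : (star x) ⬝ᵥ ((momentMatrix μ) *ᵥ x) =
          ∑ s : Fin L → Fin 2, μ s * (∑ a : Idx L, x a * indVec s a) ^ 2 := by
        rw [expand, swap1]
        refine Finset.sum_congr rfl fun s _ => ?_
        rw [sq, Finset.sum_mul_sum, Finset.mul_sum]
        refine Finset.sum_congr rfl fun a _ => ?_
        rw [Finset.mul_sum]
      rw [final]
      exact Finset.sum_nonneg fun s _ => mul_nonneg (hpos s) (sq_nonneg _)
  have hoffdiag : ∀ p q : Fin L, p ≠ q → ∀ t u : Fin 2,
      0 ≤ momentMatrix μ (p, t) (q, u) := by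
    intro p q hpq t u
    simp only [momentMatrix, hpq, if_false]
    exact marg2_nonneg μ hpos p q t u
  have hrow : ∀ p q : Fin L, p ≠ q → ∀ t : Fin 2,
      ∑ u : Fin 2, momentMatrix μ (p, t) (q, u) = marg1 μ p t := by
    intro p q hpq t
    simp only [momentMatrix, hpq, if_false]
    exact marg2_row_sum μ p q t
  refine ⟨hpsd, hoffdiag, hrow, ?_⟩
  intro ρ _ hmarg
  refine ⟨hpsd, hoffdiag, fun p q hpq t => by rw [hrow p q hpq t, hmarg], ?_⟩
  intro p t u
  simp only [momentMatrix, if_true]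
  by_cases h : t = u <;> simp [h, hmarg]
end
end

section
/- Relaxation lower bound: For every ρ ∈ ℝ^L with 0 ≤ ρ_p ≤ 1 for all p, the optimal value of the primal 2-marginal SDP is a lower bound for the multi-marginal optimal transport value: E_sdp[ρ] ≤ E_sce[ρ]. -/
open Matrix BigOperators

noncomputable section

/-- `μ ∈ Π(ρ)` : probability measure on `{0,1}^L` with 1-marginals `(1-ρ_p, ρ_p)ᵀ`. -/
def InPi {L : ℕ} (ρ : Fin L → ℝ) (μ : (Fin L → Fin 2) → ℝ) : Prop :=
  (∀ s, 0 ≤ μ s) ∧ (∑ s : Fin L → Fin 2, μ s = 1) ∧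
  (∀ p t, marg1 μ p t = mu1 ρ p t)

/-- The MMOT cost of `μ`, written in terms of its 2-marginals. -/
def sceCost {L : ℕ} (C : Matrix (Idx L) (Idx L) ℝ) (μ : (Fin L → Fin 2) → ℝ) : ℝ :=
  ∑ p : Fin L, ∑ q : Fin L,
    if p ≠ q then ∑ t : Fin 2, ∑ u : Fin 2, C (p, t) (q, u) * marg2 μ p q t u else 0

/-- Set of MMOT cost values over `Π(ρ)`; `E_sce[ρ]` is its infimum. -/
def sceValues {L : ℕ} (ρ : Fin L → ℝ) (C : Matrix (Idx L) (Idx L) ℝ) : Set ℝ :=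
  {x | ∃ μ : (Fin L → Fin 2) → ℝ, InPi ρ μ ∧ x = sceCost C μ}

/-- Set of objective values attained by primal feasible points; `E_sdp[ρ]` is its infimum. -/
def primalValues {L : ℕ} (ρ : Fin L → ℝ) (C : Matrix (Idx L) (Idx L) ℝ) : Set ℝ :=
  {x | ∃ M : Matrix (Idx L) (Idx L) ℝ, PrimalFeasible ρ M ∧ x = Matrix.trace (C * M)}


namespace SdpAux

variable {L : ℕ}

lemma mu1_nonneg {ρ : Fin L → ℝ} (hρ : ∀ p, 0 ≤ ρ p ∧ ρ p ≤ 1) (p : Fin L) (t : Fin 2) :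
    0 ≤ mu1 ρ p t := by
  unfold mu1; split
  · linarith [(hρ p).2]
  · exact (hρ p).1

lemma mu1_le_one {ρ : Fin L → ℝ} (hρ : ∀ p, 0 ≤ ρ p ∧ ρ p ≤ 1) (p : Fin L) (t : Fin 2) :
    mu1 ρ p t ≤ 1 := by
  unfold mu1; split
  · linarith [(hρ p).1]
  · exact (hρ p).2

lemma mu1_sum (ρ : Fin L → ℝ) (p : Fin L) : ∑ t : Fin 2, mu1 ρ p t = 1 := by
  simp [Fin.sum_univ_two, mu1]

/-- indicator vector -/
def vv (s : Fin L → Fin 2) (i : Idx L) : ℝ := if s i.1 = i.2 then 1 else 0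

lemma marg2_rep (μ : (Fin L → Fin 2) → ℝ) (p q : Fin L) (t u : Fin 2) :
    marg2 μ p q t u = ∑ s : Fin L → Fin 2, μ s * vv s (p, t) * vv s (q, u) := by
  unfold marg2 vv
  refine Finset.sum_congr rfl fun s _ => ?_
  by_cases h1 : s p = t <;> by_cases h2 : s q = u <;> simp [h1, h2]

lemma marg2_symm (μ : (Fin L → Fin 2) → ℝ) (p q : Fin L) (t u : Fin 2) :
    marg2 μ q p u t = marg2 μ p q t u := by
  unfold marg2
  exact Finset.sum_congr rfl fun s _ => if_congr and_comm rfl rfl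

lemma marg2_nonneg {μ : (Fin L → Fin 2) → ℝ} (hμ : ∀ s, 0 ≤ μ s) (p q : Fin L) (t u : Fin 2) :
    0 ≤ marg2 μ p q t u := by
  refine Finset.sum_nonneg fun s _ => ?_
  split
  · exact hμ s
  · exact le_rfl

lemma sum_marg2 (μ : (Fin L → Fin 2) → ℝ) (p q : Fin L) (t : Fin 2) :
    ∑ u : Fin 2, marg2 μ p q t u = marg1 μ p t := by
  unfold marg2 marg1
  rw [Finset.sum_comm]
  refine Finset.sum_congr rfl fun s _ => ?_
  by_cases h : s p = t
  · simp [h]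
  · simp [h]

lemma marg2_diag (μ : (Fin L → Fin 2) → ℝ) (p : Fin L) (t u : Fin 2) :
    marg2 μ p p t u = if t = u then marg1 μ p t else 0 := by
  unfold marg2 marg1
  by_cases h : t = u
  · subst h; simp
  · rw [if_neg h]
    refine Finset.sum_eq_zero fun s _ => ?_
    rw [if_neg]
    rintro ⟨h1, h2⟩
    exact h (h1 ▸ h2 ▸ rfl)

/-- the 2-marginal matrix of a measure -/
def meas (μ : (Fin L → Fin 2) → ℝ) : Matrix (Idx L) (Idx L) ℝ :=
  fun i j => marg2 μ i.1 j.1 i.2 j.2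

lemma triple_swap {α β γ : Type*} [Fintype α] [Fintype β] [Fintype γ]
    (f : α → β → γ → ℝ) :
    ∑ i : α, ∑ j : β, ∑ s : γ, f i j s = ∑ s : γ, ∑ i : α, ∑ j : β, f i j s :=
  calc ∑ i : α, ∑ j : β, ∑ s : γ, f i j s
      = ∑ i : α, ∑ s : γ, ∑ j : β, f i j s :=
        Finset.sum_congr rfl fun i _ => Finset.sum_comm
    _ = ∑ s : γ, ∑ i : α, ∑ j : β, f i j s := Finset.sum_comm

lemma meas_posSemidef {μ : (Fin L → Fin 2) → ℝ} (hμ : ∀ s, 0 ≤ μ s) :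
    (meas μ).PosSemidef := by
  refine Matrix.PosSemidef.of_dotProduct_mulVec_nonneg ?_ ?_
  · ext i j
    simp only [Matrix.conjTranspose_apply, meas, star_trivial]
    exact marg2_symm μ i.1 j.1 i.2 j.2
  · intro x
    have key : dotProduct (star x) (meas μ *ᵥ x)
        = ∑ s : Fin L → Fin 2, μ s * (∑ i : Idx L, vv s i * x i) ^ 2 := by
      calc dotProduct (star x) (meas μ *ᵥ x)
          = ∑ i : Idx L, x i * ∑ j : Idx L, meas μ i j * x j := by
            simp [dotProduct, Matrix.mulVec]
        _ = ∑ i : Idx L, ∑ j : Idx L, ∑ s : Fin L → Fin 2,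
              μ s * (vv s i * x i) * (vv s j * x j) := by
            refine Finset.sum_congr rfl fun i _ => ?_
            rw [Finset.mul_sum]
            refine Finset.sum_congr rfl fun j _ => ?_
            rw [show meas μ i j = ∑ s : Fin L → Fin 2, μ s * vv s i * vv s j from
              marg2_rep μ i.1 j.1 i.2 j.2, Finset.sum_mul, Finset.mul_sum]
            exact Finset.sum_congr rfl fun s _ => by ring
        _ = ∑ s : Fin L → Fin 2, ∑ i : Idx L, ∑ j : Idx L,
              μ s * (vv s i * x i) * (vv s j * x j) := triple_swap _
        _ = ∑ s : Fin L → Fin 2, μ s * (∑ i : Idx L, vv s i * x i) ^ 2 := by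
            refine Finset.sum_congr rfl fun s _ => ?_
            rw [sq, Finset.sum_mul_sum, Finset.mul_sum]
            refine Finset.sum_congr rfl fun i _ => ?_
            rw [Finset.mul_sum]
            exact Finset.sum_congr rfl fun j _ => by ring
    rw [key]
    exact Finset.sum_nonneg fun s _ => mul_nonneg (hμ s) (sq_nonneg _)

lemma trace_meas (C : Matrix (Idx L) (Idx L) ℝ)
    (hCdiag : ∀ p : Fin L, ∀ t u : Fin 2, C (p, t) (p, u) = 0)
    (μ : (Fin L → Fin 2) → ℝ) :
    Matrix.trace (C * meas μ) = sceCost C μ := by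
  have h1 : Matrix.trace (C * meas μ)
      = ∑ p : Fin L, ∑ q : Fin L, ∑ t : Fin 2, ∑ u : Fin 2,
          C (p, t) (q, u) * marg2 μ p q t u := by
    calc Matrix.trace (C * meas μ)
        = ∑ i : Idx L, ∑ j : Idx L, C i j * meas μ j i := by
          simp [Matrix.trace, Matrix.diag, Matrix.mul_apply]
      _ = ∑ p : Fin L, ∑ t : Fin 2, ∑ q : Fin L, ∑ u : Fin 2,
            C (p, t) (q, u) * marg2 μ p q t u := by
          rw [Fintype.sum_prod_type]
          refine Finset.sum_congr rfl fun p _ => Finset.sum_congr rfl fun t _ => ?_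
          rw [Fintype.sum_prod_type]
          refine Finset.sum_congr rfl fun q _ => Finset.sum_congr rfl fun u _ => ?_
          rw [show meas μ (q, u) (p, t) = marg2 μ p q t u from marg2_symm μ p q t u]
      _ = ∑ p : Fin L, ∑ q : Fin L, ∑ t : Fin 2, ∑ u : Fin 2,
            C (p, t) (q, u) * marg2 μ p q t u :=
          Finset.sum_congr rfl fun p _ => Finset.sum_comm
  rw [h1]
  unfold sceCost
  refine Finset.sum_congr rfl fun p _ => Finset.sum_congr rfl fun q _ => ?_
  by_cases h : p ≠ q
  · rw [if_pos h]
  · push_neg at h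
    subst h
    rw [if_neg (by simp)]
    refine Finset.sum_eq_zero fun t _ => Finset.sum_eq_zero fun u _ => ?_
    rw [hCdiag p t u, zero_mul]

/-- the independent (product) coupling -/
def prodMeas (ρ : Fin L → ℝ) : (Fin L → Fin 2) → ℝ :=
  fun s => ∏ p : Fin L, mu1 ρ p (s p)

lemma prodMeas_inPi {ρ : Fin L → ℝ} (hρ : ∀ p, 0 ≤ ρ p ∧ ρ p ≤ 1) :
    InPi ρ (prodMeas ρ) := by
  refine ⟨fun s => Finset.prod_nonneg fun p _ => mu1_nonneg hρ p (s p), ?_, ?_⟩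
  · rw [show (∑ s : Fin L → Fin 2, prodMeas ρ s)
        = ∏ p : Fin L, ∑ t : Fin 2, mu1 ρ p t from (Fintype.prod_sum _).symm]
    exact Finset.prod_eq_one fun p _ => mu1_sum ρ p
  · intro p t
    classical
    set f : Fin L → Fin 2 → ℝ :=
      fun q u => if q = p then (if u = t then mu1 ρ q u else 0) else mu1 ρ q u with hf
    have step1 : marg1 (prodMeas ρ) p t = ∑ s : Fin L → Fin 2, ∏ q : Fin L, f q (s q) := by
      unfold marg1 prodMeas
      refine Finset.sum_congr rfl fun s _ => ?_
      by_cases h : s p = t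
      · rw [if_pos h]
        refine (Finset.prod_congr rfl fun q _ => ?_).symm
        by_cases hq : q = p
        · subst hq; simp [hf, h]
        · simp [hf, hq]
      · rw [if_neg h]
        refine (Finset.prod_eq_zero (Finset.mem_univ p) ?_).symm
        simp [hf, h]
    rw [step1, ← Fintype.prod_sum]
    have hother : ∀ q : Fin L, q ≠ p → (∑ u : Fin 2, f q u) = 1 := by
      intro q hq
      simp only [hf, if_neg hq]
      exact mu1_sum ρ q
    have hp : (∑ u : Fin 2, f p u) = mu1 ρ p t := by
      simp [hf]
    calc ∏ q : Fin L, ∑ u : Fin 2, f q u = ∑ u : Fin 2, f p u :=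
          Finset.prod_eq_single p (fun q _ hq => hother q hq)
            (fun h => absurd (Finset.mem_univ p) h)
      _ = mu1 ρ p t := hp

end SdpAux

/-- Relaxation lower bound: `E_sdp[ρ] ≤ E_sce[ρ]`. -/
theorem sdp_lower_bound (L : ℕ) (hL : 2 ≤ L) (ρ : Fin L → ℝ)
    (hρ : ∀ p, 0 ≤ ρ p ∧ ρ p ≤ 1)
    (C : Matrix (Idx L) (Idx L) ℝ) (hCsymm : C.IsSymm)
    (hCdiag : ∀ p : Fin L, ∀ t u : Fin 2, C (p, t) (p, u) = 0) :
    sInf (primalValues ρ C) ≤ sInf (sceValues ρ C) := by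
  classical
  open SdpAux in
  have hsub : sceValues ρ C ⊆ primalValues ρ C := by
    rintro x ⟨μ, ⟨hnn, hsum, hmarg⟩, rfl⟩
    refine ⟨meas μ, ⟨meas_posSemidef hnn, ?_, ?_, ?_⟩, (trace_meas C hCdiag μ).symm⟩
    · intro p q _ t u
      exact marg2_nonneg hnn p q t u
    · intro p q _ t
      rw [show (∑ u : Fin 2, meas μ (p, t) (q, u)) = ∑ u : Fin 2, marg2 μ p q t u from rfl,
        sum_marg2, hmarg]
    · intro p t u
      rw [show meas μ (p, t) (p, u) = marg2 μ p p t u from rfl, marg2_diag, hmarg]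
  have hne : (sceValues ρ C).Nonempty :=
    ⟨sceCost C (prodMeas ρ), prodMeas ρ, prodMeas_inPi hρ, rfl⟩
  have hbdd : BddBelow (primalValues ρ C) := by
    refine ⟨-(∑ i : Idx L, ∑ j : Idx L, |C i j|), ?_⟩
    rintro x ⟨M, ⟨_, hpos, hrow, hdiag⟩, rfl⟩
    have hMb : ∀ i j : Idx L, 0 ≤ M i j ∧ M i j ≤ 1 := by
      rintro ⟨p, t⟩ ⟨q, u⟩
      by_cases h : p = q
      · subst h
        rw [hdiag p t u]
        split
        · exact ⟨mu1_nonneg hρ p t, mu1_le_one hρ p t⟩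
        · exact ⟨le_rfl, zero_le_one⟩
      · refine ⟨hpos p q h t u, ?_⟩
        have h1 : M (p, t) (q, u) ≤ ∑ u' : Fin 2, M (p, t) (q, u') :=
          Finset.single_le_sum (fun u' _ => hpos p q h t u') (Finset.mem_univ u)
        calc M (p, t) (q, u) ≤ mu1 ρ p t := by rw [← hrow p q h t]; exact h1
          _ ≤ 1 := mu1_le_one hρ p t
    have htr : Matrix.trace (C * M) = ∑ i : Idx L, ∑ j : Idx L, C i j * M j i := by
      simp [Matrix.trace, Matrix.diag, Matrix.mul_apply]
    rw [htr, neg_eq_neg_one_mul, Finset.mul_sum]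
    refine Finset.sum_le_sum fun i _ => ?_
    rw [Finset.mul_sum]
    refine Finset.sum_le_sum fun j _ => ?_
    have h0 := (hMb j i).1
    have h1 := (hMb j i).2
    have habs : |C i j * M j i| ≤ |C i j| := by
      rw [abs_mul, abs_of_nonneg h0]
      exact mul_le_of_le_one_right (abs_nonneg _) h1
    calc -1 * |C i j| = -|C i j| := by ring
      _ ≤ -|C i j * M j i| := neg_le_neg habs
      _ ≤ C i j * M j i := neg_abs_le _
  exact csInf_le_csInf hbdd hne hsub
end
end

section
/- No strictly feasible primal point: Let L ≥ 2 and let M be any matrix feasible for the primal 2-marginal SDP associated with ρ. Then for each i = 1,…,L−1 the vector u^(i) ∈ ℝ^{2L}, whose i-th 2-block equals (1,1)ᵀ, whose (i+1)-st 2-block equals (−1,−1)ᵀ, and whose other blocks are zero, satisfies M u^(i) = 0. Consequently no feasible M is positive definite, and the primal 2-marginal SDP has no strictly feasible point (so Slater's condition fails). -/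
open Matrix BigOperators

noncomputable section

/-- The vector `u^(i)` whose `i`-th 2-block is `(1,1)ᵀ`, whose `(i+1)`-st 2-block is
`(-1,-1)ᵀ`, and whose other blocks vanish. -/
def uvec {L : ℕ} (i : Fin L) (h : (i : ℕ) + 1 < L) : Idx L → ℝ :=
  fun a => if a.1 = i then 1 else if a.1 = ⟨(i : ℕ) + 1, h⟩ then -1 else 0

/-- No strictly feasible primal point: every primal feasible `M` annihilates each
vector `u^(i)`, hence is never positive definite, and the primal 2-marginal SDP has
no strictly feasible point (Slater's condition fails). -/
theorem no_strictly_feasible_point (L : ℕ) (hL : 2 ≤ L) (ρ : Fin L → ℝ)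
    (hρ : ∀ p, 0 ≤ ρ p ∧ ρ p ≤ 1) :
    (∀ M : Matrix (Idx L) (Idx L) ℝ, PrimalFeasible ρ M →
        ∀ (i : Fin L) (h : (i : ℕ) + 1 < L), M.mulVec (uvec i h) = 0) ∧
    (∀ M : Matrix (Idx L) (Idx L) ℝ, PrimalFeasible ρ M → ¬ M.PosDef) ∧
    ¬ (∃ M : Matrix (Idx L) (Idx L) ℝ, PrimalFeasible ρ M ∧ M.PosDef ∧
        ∀ p q : Fin L, p ≠ q → ∀ t u : Fin 2, 0 < M (p, t) (q, u)) := by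
  have key : ∀ M : Matrix (Idx L) (Idx L) ℝ, PrimalFeasible ρ M →
      ∀ (i : Fin L) (h : (i : ℕ) + 1 < L), M.mulVec (uvec i h) = 0 := by
    intro M hM i h
    obtain ⟨hpsd, hnn, hmarg, hdiag⟩ := hM
    have hsum : ∀ p q : Fin L, ∀ t : Fin 2, ∑ u : Fin 2, M (p,t) (q,u) = mu1 ρ p t := by
      intro p q t
      by_cases hpq : p = q
      · subst hpq
        simp [hdiag p t]
      · exact hmarg p q hpq t
    funext a
    obtain ⟨p, t⟩ := a
    show ∑ b : Idx L, M (p,t) b * uvec i h b = 0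
    rw [Fintype.sum_prod_type]
    have hblock : ∀ q : Fin L, ∑ u : Fin 2, M (p,t) (q,u) * uvec i h (q,u)
        = mu1 ρ p t * (if q = i then 1 else if q = ⟨(i:ℕ)+1, h⟩ then -1 else 0) := by
      intro q
      have hv : ∀ u : Fin 2, uvec i h (q,u)
          = (if q = i then 1 else if q = ⟨(i:ℕ)+1,h⟩ then -1 else 0) := fun u => rfl
      simp only [hv]
      rw [← Finset.sum_mul, hsum p q t]
    rw [Finset.sum_congr rfl (fun q _ => hblock q), ← Finset.mul_sum]
    have hij : i ≠ (⟨(i:ℕ)+1, h⟩ : Fin L) := by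
      intro heq
      have := congrArg Fin.val heq
      simp at this
    have hzero : ∑ q : Fin L, (if q = i then (1:ℝ) else if q = ⟨(i:ℕ)+1,h⟩ then -1 else 0) = 0 := by
      have hq : ∀ q : Fin L, (if q = i then (1:ℝ) else if q = ⟨(i:ℕ)+1,h⟩ then -1 else 0)
          = (if q = i then (1:ℝ) else 0) + (if q = ⟨(i:ℕ)+1,h⟩ then -1 else 0) := by
        intro q
        by_cases h1 : q = i
        · subst h1; simp [hij]
        · by_cases h2 : q = ⟨(i:ℕ)+1,h⟩ <;> simp [h1, h2, Ne.symm hij]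
      rw [Finset.sum_congr rfl (fun q _ => hq q), Finset.sum_add_distrib]
      simp
    rw [hzero, mul_zero]
  have notPD : ∀ M : Matrix (Idx L) (Idx L) ℝ, PrimalFeasible ρ M → ¬ M.PosDef := by
    intro M hM hPD
    have h1 : (0 : ℕ) + 1 < L := by omega
    set i : Fin L := ⟨0, by omega⟩
    have hmv := key M hM i h1
    have hu : uvec i h1 ≠ 0 := by
      intro h0
      have := congrFun h0 (i, 0)
      simp [uvec] at this
    have := hPD.dotProduct_mulVec_pos hu
    rw [hmv] at this
    simp at this
  refine ⟨key, notPD, ?_⟩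
  rintro ⟨M, hM, hPD, -⟩
  exact notPD M hM hPD
end
end

section
/- Row-shift identity for the Y-program value: Let f(Y) be the optimal value of the Y-program. For each i = 1,…,L−1, let P_i ∈ ℝ^{2L} be the vector whose i-th 2-block is 1₂, whose (i+1)-st 2-block is −1₂, and whose other blocks are zero. Then for every symmetric-blocked Y ∈ ℝ^{2L×2L} and every v ∈ ℝ^{2L} with 2-blocks v_q ∈ ℝ², one has f(Y + P_i vᵀ) = f(Y) − v_i·μ_i^(1) − v_{i+1}·μ_{i+1}^(1). -/
open Matrix BigOperators

noncomputable section

/-- The dual objective `F(Y, {φ_pq, ψ_pq})`. -/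
def dualObj {L : ℕ} (ρ : Fin L → ℝ) (Y : Matrix (Idx L) (Idx L) ℝ)
    (φ ψ : Fin L → Fin L → Fin 2 → ℝ) : ℝ :=
  2 * ∑ p : Fin L, ∑ q : Fin L,
      (if p < q then
        (∑ t : Fin 2, φ p q t * mu1 ρ p t) + (∑ u : Fin 2, ψ p q u * mu1 ρ q u)
       else 0)
    - ∑ p : Fin L, ∑ t : Fin 2, Y (p, t) (p, t) * mu1 ρ p t

/-- Set of objective values of the `Y`-program. -/
def Yvalues {L : ℕ} (ρ : Fin L → ℝ) (C Y : Matrix (Idx L) (Idx L) ℝ) : Set ℝ :=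
  {x | ∃ φ ψ : Fin L → Fin L → Fin 2 → ℝ,
    (∀ p q : Fin L, p < q → ∀ t u : Fin 2,
        φ p q t + ψ p q u ≤ C (p, t) (q, u) - Y (p, t) (q, u)) ∧
    x = dualObj ρ Y φ ψ}

/-- The optimal value `f(Y)` of the `Y`-program. -/
def fval {L : ℕ} (ρ : Fin L → ℝ) (C Y : Matrix (Idx L) (Idx L) ℝ) : ℝ :=
  sSup (Yvalues ρ C Y)

/-- The vector `P_i` whose `i`-th 2-block is `1₂`, whose `(i+1)`-st 2-block is `-1₂`,
and whose other blocks vanish. -/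
def Pvec {L : ℕ} (i : Fin L) (h : (i : ℕ) + 1 < L) : Idx L → ℝ :=
  fun a => if a.1 = i then 1 else if a.1 = ⟨(i : ℕ) + 1, h⟩ then -1 else 0

-- ### auxiliary lemmas

lemma sum_mu1 {L : ℕ} (ρ : Fin L → ℝ) (q : Fin L) : ∑ u : Fin 2, mu1 ρ q u = 1 := by
  simp [Fin.sum_univ_two, mu1]

lemma mu1_nonneg {L : ℕ} {ρ : Fin L → ℝ} (hρ : ∀ p, 0 ≤ ρ p ∧ ρ p ≤ 1)
    (p : Fin L) (t : Fin 2) : 0 ≤ mu1 ρ p t := by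
  unfold mu1; split
  · linarith [(hρ p).2]
  · exact (hρ p).1

lemma sum_mul_e {L : ℕ} {i i1 : Fin L} (hne : i ≠ i1) (g : Fin L → ℝ) :
    ∑ p : Fin L, (if p = i then (1:ℝ) else if p = i1 then -1 else 0) * g p
      = g i - g i1 := by
  have : ∀ p : Fin L, (if p = i then (1:ℝ) else if p = i1 then -1 else 0) * g p
      = (if p = i then g p else 0) + (if p = i1 then -g p else 0) := by
    intro p
    by_cases h1 : p = i
    · subst h1; simp [fun hh : p = i1 => hne hh]
    · by_cases h2 : p = i1 <;> simp [h1, h2, Ne.symm hne]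
  rw [Finset.sum_congr rfl fun p _ => this p, Finset.sum_add_distrib,
    Finset.sum_ite_eq' Finset.univ i g, Finset.sum_ite_eq' Finset.univ i1 (fun p => -g p)]
  simp [sub_eq_add_neg]

lemma dualObj_shift {L : ℕ} (ρ : Fin L → ℝ) (Y : Matrix (Idx L) (Idx L) ℝ)
    (v : Idx L → ℝ) (i : Fin L) (h : (i : ℕ) + 1 < L)
    (φ ψ : Fin L → Fin L → Fin 2 → ℝ) :
    dualObj ρ (Y + Matrix.of fun a b => Pvec i h a * v b) φ
      (fun p q u => ψ p q u - Pvec i h (p, 0) * v (q, u))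
    = dualObj ρ Y φ ψ - (∑ t : Fin 2, v (i, t) * mu1 ρ i t)
        - (∑ t : Fin 2, v (⟨(i : ℕ) + 1, h⟩, t) * mu1 ρ ⟨(i : ℕ) + 1, h⟩ t) := by
  set i1 : Fin L := ⟨(i : ℕ) + 1, h⟩ with hi1
  have hne : i ≠ i1 := by
    intro hh
    have := congrArg Fin.val hh
    simp [hi1] at this
  set w : Fin L → ℝ := fun p => ∑ t : Fin 2, v (p, t) * mu1 ρ p t with hw
  have hP : ∀ p : Fin L, ∀ t : Fin 2,
      Pvec i h (p, t) = (if p = i then (1:ℝ) else if p = i1 then -1 else 0) := by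
    intro p t; rfl
  -- the diagonal part
  have hdiag : ∑ p : Fin L, ∑ t : Fin 2,
      (Y + Matrix.of fun a b => Pvec i h a * v b) (p, t) (p, t) * mu1 ρ p t
      = (∑ p : Fin L, ∑ t : Fin 2, Y (p, t) (p, t) * mu1 ρ p t) + (w i - w i1) := by
    have : ∀ p : Fin L, ∑ t : Fin 2,
        (Y + Matrix.of fun a b => Pvec i h a * v b) (p, t) (p, t) * mu1 ρ p t
        = (∑ t : Fin 2, Y (p, t) (p, t) * mu1 ρ p t)
          + (if p = i then (1:ℝ) else if p = i1 then -1 else 0) * w p := by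
      intro p
      rw [hw, Finset.mul_sum, ← Finset.sum_add_distrib]
      refine Finset.sum_congr rfl fun t _ => ?_
      simp only [Matrix.add_apply, Matrix.of_apply, hP p t]
      ring
    rw [Finset.sum_congr rfl fun p _ => this p, Finset.sum_add_distrib, sum_mul_e hne]
  -- the off-diagonal part
  have hoff : ∑ p : Fin L, ∑ q : Fin L,
      (if p < q then
        (∑ t : Fin 2, φ p q t * mu1 ρ p t)
          + (∑ u : Fin 2, (ψ p q u - Pvec i h (p, 0) * v (q, u)) * mu1 ρ q u)
       else 0)
      = (∑ p : Fin L, ∑ q : Fin L,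
          (if p < q then
            (∑ t : Fin 2, φ p q t * mu1 ρ p t) + (∑ u : Fin 2, ψ p q u * mu1 ρ q u)
           else 0)) - w i1 := by
    have step1 : ∀ p q : Fin L,
        (if p < q then
          (∑ t : Fin 2, φ p q t * mu1 ρ p t)
            + (∑ u : Fin 2, (ψ p q u - Pvec i h (p, 0) * v (q, u)) * mu1 ρ q u)
         else 0)
        = (if p < q then
            (∑ t : Fin 2, φ p q t * mu1 ρ p t) + (∑ u : Fin 2, ψ p q u * mu1 ρ q u)
           else 0)
          - (if p = i then (1:ℝ) else if p = i1 then -1 else 0)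
              * (if p < q then w q else 0) := by
      intro p q
      by_cases hpq : p < q
      · simp only [hpq, if_true, hP p 0, hw]
        rw [Finset.mul_sum]
        have : ∑ u : Fin 2, (ψ p q u
            - (if p = i then (1:ℝ) else if p = i1 then -1 else 0) * v (q, u)) * mu1 ρ q u
            = (∑ u : Fin 2, ψ p q u * mu1 ρ q u)
              - ∑ u : Fin 2, (if p = i then (1:ℝ) else if p = i1 then -1 else 0)
                  * (v (q, u) * mu1 ρ q u) := by
          rw [← Finset.sum_sub_distrib]
          refine Finset.sum_congr rfl fun u _ => ?_
          ring
        rw [this]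
        ring
      · simp [hpq]
    rw [Finset.sum_congr rfl fun p _ => Finset.sum_congr rfl fun q _ => step1 p q]
    have : ∀ p : Fin L, ∑ q : Fin L,
        ((if p < q then
            (∑ t : Fin 2, φ p q t * mu1 ρ p t) + (∑ u : Fin 2, ψ p q u * mu1 ρ q u)
          else 0)
          - (if p = i then (1:ℝ) else if p = i1 then -1 else 0)
              * (if p < q then w q else 0))
        = (∑ q : Fin L,
            (if p < q then
              (∑ t : Fin 2, φ p q t * mu1 ρ p t) + (∑ u : Fin 2, ψ p q u * mu1 ρ q u)
             else 0))
          - (if p = i then (1:ℝ) else if p = i1 then -1 else 0)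
              * (∑ q : Fin L, if p < q then w q else 0) := by
      intro p
      rw [Finset.sum_sub_distrib, Finset.mul_sum]
    rw [Finset.sum_congr rfl fun p _ => this p, Finset.sum_sub_distrib,
      sum_mul_e hne (fun p => ∑ q : Fin L, if p < q then w q else 0)]
    congr 1
    -- T i - T i1 = w i1
    have key : ∀ q : Fin L,
        (if i < q then w q else 0) - (if i1 < q then w q else 0)
        = if q = i1 then w q else 0 := by
      intro q
      by_cases hq : q = i1
      · have h1 : i < i1 := by rw [hi1, Fin.lt_def]; exact Nat.lt_succ_self _
        simp [hq, h1]
      · have : (i < q) ↔ (i1 < q) := by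
          rw [Fin.lt_def, Fin.lt_def]
          have hq' : (q : ℕ) ≠ (i : ℕ) + 1 := by
            intro hh; exact hq (Fin.ext (by simp [hi1, hh]))
          simp only [hi1]
          omega
        by_cases hiq : i < q
        · simp [hiq, this.mp hiq, hq]
        · have hiq1 : ¬ i1 < q := fun hh => hiq (this.mpr hh)
          simp [hiq, hiq1, hq]
    rw [← Finset.sum_sub_distrib, Finset.sum_congr rfl fun q _ => key q,
      Finset.sum_ite_eq' Finset.univ i1 w]
    simp
  unfold dualObj
  rw [hdiag, hoff]
  ring

-- translation of the value set
lemma Yvalues_shift {L : ℕ} (ρ : Fin L → ℝ) (C Y : Matrix (Idx L) (Idx L) ℝ)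
    (v : Idx L → ℝ) (i : Fin L) (h : (i : ℕ) + 1 < L) :
    Yvalues ρ C (Y + Matrix.of fun a b => Pvec i h a * v b)
      = (fun x => x - ((∑ t : Fin 2, v (i, t) * mu1 ρ i t)
        + (∑ t : Fin 2, v (⟨(i : ℕ) + 1, h⟩, t) * mu1 ρ ⟨(i : ℕ) + 1, h⟩ t)))
          '' Yvalues ρ C Y := by
  ext x
  constructor
  · rintro ⟨φ, ψ, hfeas, rfl⟩
    refine ⟨dualObj ρ Y φ (fun p q u => ψ p q u + Pvec i h (p, 0) * v (q, u)),
      ⟨φ, (fun p q u => ψ p q u + Pvec i h (p, 0) * v (q, u)), ?_, rfl⟩, ?_⟩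
    · intro p q hpq t u
      have := hfeas p q hpq t u
      have hPt : Pvec i h (p, t) = Pvec i h (p, 0) := rfl
      simp only [Matrix.add_apply, Matrix.of_apply, hPt] at this
      dsimp only
      linarith
    · have := dualObj_shift ρ Y v i h φ (fun p q u => ψ p q u + Pvec i h (p, 0) * v (q, u))
      simp only [add_sub_cancel_right] at this
      rw [this]; ring
  · rintro ⟨x₀, ⟨φ, ψ, hfeas, rfl⟩, rfl⟩
    refine ⟨φ, fun p q u => ψ p q u - Pvec i h (p, 0) * v (q, u), ?_, ?_⟩
    · intro p q hpq t u
      have := hfeas p q hpq t u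
      have hPt : Pvec i h (p, t) = Pvec i h (p, 0) := rfl
      simp only [Matrix.add_apply, Matrix.of_apply, hPt]
      linarith
    · rw [dualObj_shift]; ring

-- nonemptiness
lemma Yvalues_nonempty {L : ℕ} (ρ : Fin L → ℝ) (C Y : Matrix (Idx L) (Idx L) ℝ) :
    (Yvalues ρ C Y).Nonempty := by
  classical
  set φ : Fin L → Fin L → Fin 2 → ℝ := fun p q _ =>
    Finset.univ.inf' (Finset.univ_nonempty (α := Fin 2 × Fin 2))
      (fun tu => C (p, tu.1) (q, tu.2) - Y (p, tu.1) (q, tu.2)) with hφ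
  refine ⟨dualObj ρ Y φ 0, φ, 0, ?_, rfl⟩
  intro p q hpq t u
  simp only [Pi.zero_apply, add_zero, hφ]
  exact Finset.inf'_le _ (Finset.mem_univ (t, u))

-- boundedness above
lemma Yvalues_bddAbove {L : ℕ} {ρ : Fin L → ℝ} (hρ : ∀ p, 0 ≤ ρ p ∧ ρ p ≤ 1)
    (C Y : Matrix (Idx L) (Idx L) ℝ) :
    BddAbove (Yvalues ρ C Y) := by
  classical
  set M : Fin L → Fin L → ℝ := fun p q =>
    Finset.univ.sup' (Finset.univ_nonempty (α := Fin 2 × Fin 2))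
      (fun tu => C (p, tu.1) (q, tu.2) - Y (p, tu.1) (q, tu.2)) with hM
  refine ⟨2 * (∑ p : Fin L, ∑ q : Fin L, (if p < q then M p q else 0))
    - ∑ p : Fin L, ∑ t : Fin 2, Y (p, t) (p, t) * mu1 ρ p t, ?_⟩
  rintro x ⟨φ, ψ, hfeas, rfl⟩
  unfold dualObj
  have key : ∀ p q : Fin L, p < q →
      (∑ t : Fin 2, φ p q t * mu1 ρ p t) + (∑ u : Fin 2, ψ p q u * mu1 ρ q u)
        ≤ M p q := by
    intro p q hpq
    have hM0 : ∀ t u : Fin 2, φ p q t + ψ p q u ≤ M p q := by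
      intro t u
      refine (hfeas p q hpq t u).trans ?_
      exact Finset.le_sup'
        (fun tu : Fin 2 × Fin 2 => C (p, tu.1) (q, tu.2) - Y (p, tu.1) (q, tu.2))
        (Finset.mem_univ (t, u))
    set a := mu1 ρ p 0 with ha'
    set b := mu1 ρ p 1 with hb'
    set c := mu1 ρ q 0 with hc'
    set d := mu1 ρ q 1 with hd'
    have hab : a + b = 1 := by rw [ha', hb', ← Fin.sum_univ_two (f := mu1 ρ p)]; exact sum_mu1 ρ p
    have hcd : c + d = 1 := by rw [hc', hd', ← Fin.sum_univ_two (f := mu1 ρ q)]; exact sum_mu1 ρ q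
    have ha : 0 ≤ a := mu1_nonneg hρ p 0
    have hb : 0 ≤ b := mu1_nonneg hρ p 1
    have hc : 0 ≤ c := mu1_nonneg hρ q 0
    have hd : 0 ≤ d := mu1_nonneg hρ q 1
    rw [Fin.sum_univ_two, Fin.sum_univ_two]
    have expand : (φ p q 0 * a + φ p q 1 * b) + (ψ p q 0 * c + ψ p q 1 * d)
        = (φ p q 0 + ψ p q 0) * (a * c) + (φ p q 0 + ψ p q 1) * (a * d)
          + (φ p q 1 + ψ p q 0) * (b * c) + (φ p q 1 + ψ p q 1) * (b * d) := by
      linear_combination (-(φ p q 0 * a + φ p q 1 * b)) * hcd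
        + (-(ψ p q 0 * c + ψ p q 1 * d)) * hab
    rw [expand]
    have step : (φ p q 0 + ψ p q 0) * (a * c) + (φ p q 0 + ψ p q 1) * (a * d)
          + (φ p q 1 + ψ p q 0) * (b * c) + (φ p q 1 + ψ p q 1) * (b * d)
        ≤ M p q * (a * c) + M p q * (a * d) + M p q * (b * c) + M p q * (b * d) := by
      gcongr <;> first
        | exact mul_nonneg ha hc | exact mul_nonneg ha hd
        | exact mul_nonneg hb hc | exact mul_nonneg hb hd
        | exact hM0 0 0 | exact hM0 0 1 | exact hM0 1 0 | exact hM0 1 1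
    calc _ ≤ M p q * (a * c) + M p q * (a * d) + M p q * (b * c) + M p q * (b * d) := step
      _ = M p q * ((a + b) * (c + d)) := by ring
      _ = M p q := by rw [hab, hcd]; ring
  have : ∑ p : Fin L, ∑ q : Fin L,
      (if p < q then
        (∑ t : Fin 2, φ p q t * mu1 ρ p t) + (∑ u : Fin 2, ψ p q u * mu1 ρ q u)
       else 0)
      ≤ ∑ p : Fin L, ∑ q : Fin L, (if p < q then M p q else 0) := by
    refine Finset.sum_le_sum fun p _ => Finset.sum_le_sum fun q _ => ?_
    by_cases hpq : p < q
    · simpa [hpq] using key p q hpq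
    · simp [hpq]
  have h2 := mul_le_mul_of_nonneg_left this (by norm_num : (0:ℝ) ≤ 2)
  linarith

lemma sSup_image_sub {s : Set ℝ} (hne : s.Nonempty) (hbdd : BddAbove s) (c : ℝ) :
    sSup ((fun x => x - c) '' s) = sSup s - c := by
  apply le_antisymm
  · refine csSup_le (hne.image _) ?_
    rintro x ⟨y, hy, rfl⟩
    exact sub_le_sub_right (le_csSup hbdd hy) c
  · rw [sub_le_iff_le_add]
    refine csSup_le hne fun y hy => ?_
    have hbdd' : BddAbove ((fun x => x - c) '' s) := by
      obtain ⟨b, hb⟩ := hbdd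
      exact ⟨b - c, by rintro x ⟨z, hz, rfl⟩; exact sub_le_sub_right (hb hz) c⟩
    have hle : y - c ≤ sSup ((fun x => x - c) '' s) := le_csSup hbdd' ⟨y, hy, rfl⟩
    linarith

/-- Row-shift identity for the `Y`-program value:
`f(Y + P_i vᵀ) = f(Y) − v_i·μ_i^(1) − v_{i+1}·μ_{i+1}^(1)`. -/
theorem f_row_shift (L : ℕ) (hL : 2 ≤ L) (ρ : Fin L → ℝ)
    (hρ : ∀ p, 0 ≤ ρ p ∧ ρ p ≤ 1)
    (C : Matrix (Idx L) (Idx L) ℝ) (hCsymm : C.IsSymm)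
    (hCdiag : ∀ p : Fin L, ∀ t u : Fin 2, C (p, t) (p, u) = 0)
    (Y : Matrix (Idx L) (Idx L) ℝ) (hY : Y.IsSymm)
    (v : Idx L → ℝ) (i : Fin L) (h : (i : ℕ) + 1 < L) :
    fval ρ C (Y + Matrix.of fun a b => Pvec i h a * v b)
      = fval ρ C Y - (∑ t : Fin 2, v (i, t) * mu1 ρ i t)
        - (∑ t : Fin 2, v (⟨(i : ℕ) + 1, h⟩, t) * mu1 ρ ⟨(i : ℕ) + 1, h⟩ t) := by
  rw [fval, fval, Yvalues_shift,
    sSup_image_sub (Yvalues_nonempty ρ C Y) (Yvalues_bddAbove hρ C Y)]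
  ring
end
end

section
/- Gauge invariance of the Y-program value: Let f(Y) be the optimal value of the Y-program and let P ∈ ℝ^{2L×(L−1)} be the matrix whose i-th column P_i has i-th 2-block 1₂, (i+1)-st 2-block −1₂, and zero blocks otherwise. Then for every Y ∈ ℝ^{2L×2L} and every B ∈ ℝ^{(L−1)×2L}, one has f(Y + P B + Bᵀ Pᵀ) = f(Y). -/
open Matrix BigOperators

noncomputable section

/-- The matrix `P ∈ ℝ^{2L×(L−1)}` whose `i`-th column has `i`-th 2-block `1₂`,
`(i+1)`-st 2-block `-1₂`, and zero blocks otherwise. -/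
def Pmat (L : ℕ) : Matrix (Idx L) (Fin (L - 1)) ℝ :=
  fun a i =>
    if (a.1 : ℕ) = (i : ℕ) then 1
    else if (a.1 : ℕ) = (i : ℕ) + 1 then -1 else 0

/-- Splitting a double sum over ordered pairs plus the diagonal. -/
lemma sum_split_aux {L : ℕ} (A : Fin L → Fin L → ℝ) :
    (∑ p : Fin L, ∑ q : Fin L, if p < q then A q p + A p q else 0) + ∑ p : Fin L, A p p
      = ∑ p : Fin L, ∑ q : Fin L, A q p := by
  have h1 : (∑ p : Fin L, ∑ q : Fin L, if p < q then A q p + A p q else 0)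
      = (∑ p : Fin L, ∑ q : Fin L, if p < q then A q p else 0)
        + (∑ p : Fin L, ∑ q : Fin L, if q < p then A q p else 0) := by
    have h2 : (∑ p : Fin L, ∑ q : Fin L, if p < q then A p q else 0)
        = (∑ p : Fin L, ∑ q : Fin L, if q < p then A q p else 0) :=
      Finset.sum_comm
    rw [← h2, ← Finset.sum_add_distrib]
    congr 1; ext p
    rw [← Finset.sum_add_distrib]
    congr 1; ext q
    split <;> simp
  have h3 : (∑ p : Fin L, A p p) = ∑ p : Fin L, ∑ q : Fin L, if q = p then A q p else 0 := by
    simp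
  rw [h1, h3, ← Finset.sum_add_distrib, ← Finset.sum_add_distrib]
  congr 1; ext p
  rw [← Finset.sum_add_distrib, ← Finset.sum_add_distrib]
  congr 1; ext q
  rcases lt_trichotomy p q with h | h | h
  · simp [h, asymm h, h.ne']
  · subst h; simp
  · simp [h, asymm h, h.ne]

/-- The dual objective is invariant under the gauge shift of `(Y, φ, ψ)`. -/
lemma obj_shift_aux {L : ℕ} (ρ : Fin L → ℝ) (Y : Matrix (Idx L) (Idx L) ℝ)
    (g : Fin L → Idx L → ℝ) (Δ : Matrix (Idx L) (Idx L) ℝ)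
    (hΔ : ∀ p q : Fin L, ∀ t u : Fin 2, Δ (p, t) (q, u) = g p (q, u) + g q (p, t))
    (hg : ∀ a : Idx L, ∑ q : Fin L, g q a = 0)
    (φ ψ : Fin L → Fin L → Fin 2 → ℝ) :
    dualObj ρ Y φ ψ
      = dualObj ρ (Y + Δ) (fun p q t => φ p q t - g q (p, t))
          (fun p q u => ψ p q u - g p (q, u)) := by
  set A : Fin L → Fin L → ℝ := fun q p => ∑ t : Fin 2, g q (p, t) * mu1 ρ p t with hA
  have hcol : ∀ p : Fin L, ∑ q : Fin L, A q p = 0 := by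
    intro p
    have : ∑ q : Fin L, A q p = ∑ t : Fin 2, (∑ q : Fin L, g q (p, t)) * mu1 ρ p t := by
      rw [Finset.sum_comm]
      simp [hA, Finset.sum_mul]
    rw [this]
    simp [hg]
  have hT : (∑ p : Fin L, ∑ q : Fin L, if p < q then A q p + A p q else 0)
      = - ∑ p : Fin L, A p p := by
    have := sum_split_aux A
    have hz : (∑ p : Fin L, ∑ q : Fin L, A q p) = 0 := by
      simp [hcol]
    linarith
  have e1 : (∑ p : Fin L, ∑ q : Fin L,
      (if p < q then
        (∑ t : Fin 2, (φ p q t - g q (p, t)) * mu1 ρ p t)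
          + (∑ u : Fin 2, (ψ p q u - g p (q, u)) * mu1 ρ q u)
       else 0))
      = (∑ p : Fin L, ∑ q : Fin L,
          (if p < q then
            (∑ t : Fin 2, φ p q t * mu1 ρ p t) + (∑ u : Fin 2, ψ p q u * mu1 ρ q u)
           else 0))
        - (∑ p : Fin L, ∑ q : Fin L, if p < q then A q p + A p q else 0) := by
    rw [← Finset.sum_sub_distrib]
    congr 1; ext p
    rw [← Finset.sum_sub_distrib]
    congr 1; ext q
    split
    · simp only [sub_mul, Finset.sum_sub_distrib, hA]
      ring
    · ring
  have e2 : (∑ p : Fin L, ∑ t : Fin 2, (Y + Δ) (p, t) (p, t) * mu1 ρ p t)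
      = (∑ p : Fin L, ∑ t : Fin 2, Y (p, t) (p, t) * mu1 ρ p t) + 2 * ∑ p : Fin L, A p p := by
    have hpt : ∀ p : Fin L, ∀ t : Fin 2,
        (Y + Δ) (p, t) (p, t) * mu1 ρ p t
          = Y (p, t) (p, t) * mu1 ρ p t + 2 * (g p (p, t) * mu1 ρ p t) := by
      intro p t
      simp only [Matrix.add_apply, hΔ]
      ring
    simp only [hpt, Finset.sum_add_distrib, ← Finset.mul_sum, hA]
  simp only [dualObj, e1, e2, hT]
  ring

/-- Key inclusion: shifting `Y` by a gauge matrix only enlarges (in fact preserves)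
the set of attainable dual values. -/
lemma key_incl_aux {L : ℕ} (ρ : Fin L → ℝ) (C Y : Matrix (Idx L) (Idx L) ℝ)
    (g : Fin L → Idx L → ℝ) (Δ : Matrix (Idx L) (Idx L) ℝ)
    (hΔ : ∀ p q : Fin L, ∀ t u : Fin 2, Δ (p, t) (q, u) = g p (q, u) + g q (p, t))
    (hg : ∀ a : Idx L, ∑ q : Fin L, g q a = 0) :
    Yvalues ρ C Y ⊆ Yvalues ρ C (Y + Δ) := by
  rintro x ⟨φ, ψ, hfeas, rfl⟩
  refine ⟨fun p q t => φ p q t - g q (p, t), fun p q u => ψ p q u - g p (q, u), ?_, ?_⟩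
  · intro p q hpq t u
    have := hfeas p q hpq t u
    simp only [Matrix.add_apply, hΔ]
    linarith
  · exact obj_shift_aux ρ Y g Δ hΔ hg φ ψ

/-- Columns of `Pmat` sum to zero. -/
lemma Pmat_colsum_aux {L : ℕ} (hL : 2 ≤ L) (i : Fin (L - 1)) (t : Fin 2) :
    ∑ q : Fin L, Pmat L (q, t) i = 0 := by
  have hi := i.isLt
  have hiL : (i : ℕ) < L := by omega
  have hiL' : (i : ℕ) + 1 < L := by omega
  set a : Fin L := ⟨i, hiL⟩
  set b : Fin L := ⟨(i : ℕ) + 1, hiL'⟩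
  have hab : a ≠ b := by
    simp [a, b, Fin.ext_iff]
  have hterm : ∀ q : Fin L,
      Pmat L (q, t) i = (if q = a then (1 : ℝ) else 0) + (if q = b then (-1 : ℝ) else 0) := by
    intro q
    have ha : (q = a) ↔ ((q : ℕ) = (i : ℕ)) := by simp [a, Fin.ext_iff]
    have hb : (q = b) ↔ ((q : ℕ) = (i : ℕ) + 1) := by simp [b, Fin.ext_iff]
    simp only [Pmat, ha, hb]
    split_ifs with h1 h2 h3
    · omega
    · norm_num
    · norm_num
    · norm_num
  simp [hterm, Finset.sum_add_distrib, hab]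

/-- Gauge invariance of the `Y`-program value: `f(Y + PB + BᵀPᵀ) = f(Y)`. -/
theorem f_gauge_invariance (L : ℕ) (hL : 2 ≤ L) (ρ : Fin L → ℝ)
    (hρ : ∀ p, 0 ≤ ρ p ∧ ρ p ≤ 1)
    (C : Matrix (Idx L) (Idx L) ℝ) (hCsymm : C.IsSymm)
    (hCdiag : ∀ p : Fin L, ∀ t u : Fin 2, C (p, t) (p, u) = 0)
    (Y : Matrix (Idx L) (Idx L) ℝ) (B : Matrix (Fin (L - 1)) (Idx L) ℝ) :
    fval ρ C (Y + Pmat L * B + Bᵀ * (Pmat L)ᵀ) = fval ρ C Y := by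
  set g : Fin L → Idx L → ℝ := fun p a => ∑ i : Fin (L - 1), Pmat L (p, 0) i * B i a with hgdef
  set Δ : Matrix (Idx L) (Idx L) ℝ := Pmat L * B + Bᵀ * (Pmat L)ᵀ with hΔdef
  have hPt : ∀ p : Fin L, ∀ t : Fin 2, ∀ i : Fin (L - 1), Pmat L (p, t) i = Pmat L (p, 0) i := by
    intro p t i; rfl
  have hΔ : ∀ p q : Fin L, ∀ t u : Fin 2, Δ (p, t) (q, u) = g p (q, u) + g q (p, t) := by
    intro p q t u
    simp only [hΔdef, Matrix.add_apply, Matrix.mul_apply, Matrix.transpose_apply, hgdef]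
    congr 1 <;>
      exact Finset.sum_congr rfl fun i _ => by simp only [hPt]; ring
  have hg : ∀ a : Idx L, ∑ q : Fin L, g q a = 0 := by
    intro a
    have hswap : ∑ q : Fin L, g q a
        = ∑ i : Fin (L - 1), (∑ q : Fin L, Pmat L (q, 0) i) * B i a := by
      simp only [hgdef]
      rw [Finset.sum_comm]
      simp [Finset.sum_mul]
    rw [hswap]
    simp [Pmat_colsum_aux hL]
  have hΔneg : ∀ p q : Fin L, ∀ t u : Fin 2,
      (-Δ) (p, t) (q, u) = (fun p a => - g p a) p (q, u) + (fun p a => - g p a) q (p, t) := by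
    intro p q t u
    simp only [Matrix.neg_apply, hΔ]
    ring
  have hgneg : ∀ a : Idx L, ∑ q : Fin L, (fun p a => - g p a) q a = 0 := by
    intro a
    simp only [Finset.sum_neg_distrib, hg, neg_zero]
  have hback : Y + Δ + -Δ = Y := by
    abel
  have hset : Yvalues ρ C (Y + Δ) = Yvalues ρ C Y := by
    apply le_antisymm
    · have h2 := key_incl_aux ρ C (Y + Δ) (fun p a => - g p a) (-Δ) hΔneg hgneg
      rwa [hback] at h2
    · exact key_incl_aux ρ C Y g Δ hΔ hg
  have hY : Y + Pmat L * B + Bᵀ * (Pmat L)ᵀ = Y + Δ := by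
    rw [hΔdef, add_assoc]
  rw [hY]
  unfold fval
  rw [hset]
end
end

section
/- The 3-marginal relaxation is sandwiched between the 2-marginal relaxation and the exact MMOT value: For every ρ ∈ ℝ^L with 0 ≤ ρ_p ≤ 1 for all p, the optimal values satisfy E_sdp[ρ] ≤ E_3sdp[ρ] ≤ E_sce[ρ], where E_3sdp[ρ] is the optimal value of the 3-marginal SDP. -/
open Matrix BigOperators

noncomputable section

/-- Feasibility for the 3-marginal SDP: primal 2-marginal feasibility of `M` together
with nonnegative, permutation-symmetric 3-marginal variables `K_pqr` locally
consistent with the 2-marginal blocks of `M`. -/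
def Feasible3 {L : ℕ} (ρ : Fin L → ℝ) (M : Matrix (Idx L) (Idx L) ℝ)
    (K : Fin L → Fin L → Fin L → Fin 2 → Fin 2 → Fin 2 → ℝ) : Prop :=
  PrimalFeasible ρ M ∧
  (∀ p q r : Fin L, p ≠ q → q ≠ r → p ≠ r → ∀ t u w : Fin 2, 0 ≤ K p q r t u w) ∧
  (∀ p q r : Fin L, p ≠ q → q ≠ r → p ≠ r → ∀ t u w : Fin 2,
      K p q r t u w = K p r q t w u ∧
      K p q r t u w = K q p r u t w ∧
      K p q r t u w = K q r p u w t ∧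
      K p q r t u w = K r p q w t u ∧
      K p q r t u w = K r q p w u t) ∧
  (∀ p q r : Fin L, p ≠ q → q ≠ r → p ≠ r → ∀ t u : Fin 2,
      M (p, t) (q, u) = ∑ w : Fin 2, K p q r t u w)

/-- Set of objective values of the 3-marginal SDP; `E_3sdp[ρ]` is its infimum. -/
def threeValues {L : ℕ} (ρ : Fin L → ℝ) (C : Matrix (Idx L) (Idx L) ℝ) : Set ℝ :=
  {x | ∃ (M : Matrix (Idx L) (Idx L) ℝ)
         (K : Fin L → Fin L → Fin L → Fin 2 → Fin 2 → Fin 2 → ℝ),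
       Feasible3 ρ M K ∧ x = Matrix.trace (C * M)}

namespace Aux

variable {L : ℕ}

lemma marg2_symm (μ : (Fin L → Fin 2) → ℝ) (p q : Fin L) (t u : Fin 2) :
    marg2 μ p q t u = marg2 μ q p u t := by
  unfold marg2
  exact Finset.sum_congr rfl fun s _ => if_congr and_comm rfl rfl

lemma sum_marg2 (μ : (Fin L → Fin 2) → ℝ) (p q : Fin L) (t : Fin 2) :
    ∑ u : Fin 2, marg2 μ p q t u = marg1 μ p t := by
  unfold marg2 marg1
  rw [Finset.sum_comm]
  refine Finset.sum_congr rfl fun s _ => ?_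
  by_cases h : s p = t <;> simp [h]

lemma marg2_diag (μ : (Fin L → Fin 2) → ℝ) (p : Fin L) (t u : Fin 2) :
    marg2 μ p p t u = if t = u then marg1 μ p t else 0 := by
  unfold marg2 marg1
  by_cases h : t = u
  · subst h; simp
  · simp only [h, if_false]
    refine Finset.sum_eq_zero fun s _ => ?_
    split_ifs with hs
    · exact absurd (hs.1.symm.trans hs.2) h
    · rfl

lemma mu1_nonneg {ρ : Fin L → ℝ} (hρ : ∀ p, 0 ≤ ρ p ∧ ρ p ≤ 1) (p : Fin L) (t : Fin 2) :
    0 ≤ mu1 ρ p t := by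
  unfold mu1; split
  · linarith [(hρ p).2]
  · exact (hρ p).1

lemma mu1_le_one {ρ : Fin L → ℝ} (hρ : ∀ p, 0 ≤ ρ p ∧ ρ p ≤ 1) (p : Fin L) (t : Fin 2) :
    mu1 ρ p t ≤ 1 := by
  unfold mu1; split
  · linarith [(hρ p).1]
  · exact (hρ p).2

/-- the 2-marginal matrix of a measure -/
def Mmu (μ : (Fin L → Fin 2) → ℝ) : Matrix (Idx L) (Idx L) ℝ :=
  fun i j => marg2 μ i.1 j.1 i.2 j.2

/-- the 3-marginal family of a measure -/
def Kmu (μ : (Fin L → Fin 2) → ℝ) (p q r : Fin L) (t u w : Fin 2) : ℝ :=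
  ∑ s : Fin L → Fin 2, if s p = t ∧ s q = u ∧ s r = w then μ s else 0

lemma Mmu_quad (μ : (Fin L → Fin 2) → ℝ) (hμ0 : ∀ s, 0 ≤ μ s) (x : Idx L → ℝ) :
    0 ≤ x ⬝ᵥ (Mmu μ) *ᵥ x := by
  have key : x ⬝ᵥ (Mmu μ) *ᵥ x
      = ∑ s : Fin L → Fin 2,
          μ s * (∑ i : Idx L, if s i.1 = i.2 then x i else 0) ^ 2 := by
    have e1 : x ⬝ᵥ (Mmu μ) *ᵥ x
        = ∑ i : Idx L, ∑ j : Idx L, ∑ s : Fin L → Fin 2,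
            x i * ((if s i.1 = i.2 ∧ s j.1 = j.2 then μ s else 0) * x j) := by
      simp only [dotProduct, mulVec, Mmu, marg2, Finset.sum_mul, Finset.mul_sum]
    rw [e1]
    rw [show (∑ i : Idx L, ∑ j : Idx L, ∑ s : Fin L → Fin 2,
            x i * ((if s i.1 = i.2 ∧ s j.1 = j.2 then μ s else 0) * x j))
        = ∑ i : Idx L, ∑ s : Fin L → Fin 2, ∑ j : Idx L,
            x i * ((if s i.1 = i.2 ∧ s j.1 = j.2 then μ s else 0) * x j)
      from Finset.sum_congr rfl fun i _ => Finset.sum_comm]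
    rw [Finset.sum_comm]
    refine Finset.sum_congr rfl fun s _ => ?_
    rw [sq, show ((∑ i : Idx L, if s i.1 = i.2 then x i else 0) *
          (∑ j : Idx L, if s j.1 = j.2 then x j else 0))
        = ∑ i : Idx L, ∑ j : Idx L,
            (if s i.1 = i.2 then x i else 0) * (if s j.1 = j.2 then x j else 0)
      from Finset.sum_mul_sum _ _ _ _, Finset.mul_sum]
    refine Finset.sum_congr rfl fun i _ => ?_
    rw [Finset.mul_sum]
    refine Finset.sum_congr rfl fun j _ => ?_
    by_cases h1 : s i.1 = i.2 <;> by_cases h2 : s j.1 = j.2 <;> simp [h1, h2] <;> ring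
  rw [key]
  exact Finset.sum_nonneg fun s _ => mul_nonneg (hμ0 s) (sq_nonneg _)


lemma Mmu_symm (μ : (Fin L → Fin 2) → ℝ) : (Mmu μ).IsHermitian := by
  ext i j
  simp only [Mmu, conjTranspose_apply, star_trivial]
  exact marg2_symm μ j.1 i.1 j.2 i.2

lemma Mmu_feasible {ρ : Fin L → ℝ} {μ : (Fin L → Fin 2) → ℝ} (hμ : InPi ρ μ) :
    (Mmu μ).PosSemidef ∧
    (∀ p q : Fin L, p ≠ q → ∀ t u : Fin 2, 0 ≤ (Mmu μ) (p, t) (q, u)) ∧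
    (∀ p q : Fin L, p ≠ q → ∀ t : Fin 2, ∑ u : Fin 2, (Mmu μ) (p, t) (q, u) = mu1 ρ p t) ∧
    (∀ p : Fin L, ∀ t u : Fin 2, (Mmu μ) (p, t) (p, u) = if t = u then mu1 ρ p t else 0) := by
  obtain ⟨h0, _, h1⟩ := hμ
  refine ⟨⟨Mmu_symm μ, fun x => ?_⟩, fun p q _ t u => ?_, fun p q _ t => ?_, fun p t u => ?_⟩
  · exact (PosSemidef.of_dotProduct_mulVec_nonneg (Mmu_symm μ) fun y => by simpa using Mmu_quad μ h0 y).2 x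
  · refine Finset.sum_nonneg fun s _ => ?_
    split
    · exact h0 s
    · exact le_rfl
  · show ∑ u : Fin 2, marg2 μ p q t u = _
    rw [sum_marg2, h1]
  · show marg2 μ p p t u = _
    rw [marg2_diag, h1]

lemma Kmu_nonneg {μ : (Fin L → Fin 2) → ℝ} (h0 : ∀ s, 0 ≤ μ s)
    (p q r : Fin L) (t u w : Fin 2) : 0 ≤ Kmu μ p q r t u w := by
  refine Finset.sum_nonneg fun s _ => ?_
  split
  · exact h0 s
  · exact le_rfl

lemma Kmu_perm (μ : (Fin L → Fin 2) → ℝ) (p q r : Fin L) (t u w : Fin 2) :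
      Kmu μ p q r t u w = Kmu μ p r q t w u ∧
      Kmu μ p q r t u w = Kmu μ q p r u t w ∧
      Kmu μ p q r t u w = Kmu μ q r p u w t ∧
      Kmu μ p q r t u w = Kmu μ r p q w t u ∧
      Kmu μ p q r t u w = Kmu μ r q p w u t := by
  refine ⟨?_, ?_, ?_, ?_, ?_⟩ <;>
    exact Finset.sum_congr rfl fun s _ => if_congr (by tauto) rfl rfl

lemma Kmu_consistent (μ : (Fin L → Fin 2) → ℝ) (p q r : Fin L) (t u : Fin 2) :
    (Mmu μ) (p, t) (q, u) = ∑ w : Fin 2, Kmu μ p q r t u w := by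
  show marg2 μ p q t u = _
  unfold marg2 Kmu
  rw [Finset.sum_comm]
  refine Finset.sum_congr rfl fun s _ => ?_
  by_cases h : s p = t ∧ s q = u
  · rw [if_pos h]
    rw [Fin.sum_univ_two]
    by_cases hr : s r = 0
    · simp [h.1, h.2, hr]
    · simp [h.1, h.2, Fin.eq_one_of_ne_zero (s r) hr, Fin.one_eq_zero_iff]
  · rw [if_neg h]
    refine (Finset.sum_eq_zero fun w _ => ?_).symm
    rw [if_neg (fun hc => h ⟨hc.1, hc.2.1⟩)]


lemma trace_Mmu (C : Matrix (Idx L) (Idx L) ℝ)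
    (hCdiag : ∀ p : Fin L, ∀ t u : Fin 2, C (p, t) (p, u) = 0)
    (μ : (Fin L → Fin 2) → ℝ) :
    Matrix.trace (C * Mmu μ) = sceCost C μ := by
  have e1 : Matrix.trace (C * Mmu μ)
      = ∑ p : Fin L, ∑ t : Fin 2, ∑ q : Fin L, ∑ u : Fin 2,
          C (p, t) (q, u) * marg2 μ p q t u := by
    rw [Matrix.trace]
    rw [show ∑ i : Idx L, (C * Mmu μ).diag i
        = ∑ i : Idx L, ∑ j : Idx L, C i j * Mmu μ j i from
      Finset.sum_congr rfl fun i _ => rfl]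
    rw [Fintype.sum_prod_type]
    refine Finset.sum_congr rfl fun p _ => Finset.sum_congr rfl fun t _ => ?_
    rw [Fintype.sum_prod_type]
    refine Finset.sum_congr rfl fun q _ => Finset.sum_congr rfl fun u _ => ?_
    show C (p, t) (q, u) * marg2 μ q p u t = _
    rw [marg2_symm]
  rw [e1]
  unfold sceCost
  refine Finset.sum_congr rfl fun p _ => ?_
  rw [Finset.sum_comm]
  refine Finset.sum_congr rfl fun q _ => ?_
  by_cases h : p = q
  · subst h
    simp only [ne_eq, not_true_eq_false, if_false]
    refine Finset.sum_eq_zero fun t _ => Finset.sum_eq_zero fun u _ => ?_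
    rw [hCdiag, zero_mul]
  · rw [if_pos h]

/-- the product measure -/
def prodMu (ρ : Fin L → ℝ) (s : Fin L → Fin 2) : ℝ :=
  ∏ p : Fin L, mu1 ρ p (s p)

lemma sum_mu1 (ρ : Fin L → ℝ) (p : Fin L) : ∑ t : Fin 2, mu1 ρ p t = 1 := by
  rw [Fin.sum_univ_two]
  simp [mu1]

lemma prodMu_inPi {ρ : Fin L → ℝ} (hρ : ∀ p, 0 ≤ ρ p ∧ ρ p ≤ 1) :
    InPi ρ (prodMu ρ) := by
  refine ⟨fun s => Finset.prod_nonneg fun p _ => mu1_nonneg hρ p (s p), ?_, ?_⟩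
  · have := Finset.prod_univ_sum (fun _ : Fin L => (Finset.univ : Finset (Fin 2)))
      (fun p t => mu1 ρ p t)
    rw [Fintype.piFinset_univ] at this
    rw [show (∑ s : Fin L → Fin 2, prodMu ρ s) = ∏ p : Fin L, ∑ t : Fin 2, mu1 ρ p t
      from this.symm]
    rw [Finset.prod_congr rfl fun p _ => sum_mu1 ρ p, Finset.prod_const_one]
  · intro p t
    have e1 : marg1 (prodMu ρ) p t
        = ∑ s : Fin L → Fin 2, ∏ q : Fin L,
            (if q = p then (if s q = t then mu1 ρ q (s q) else 0) else mu1 ρ q (s q)) := by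
      refine Finset.sum_congr rfl fun s _ => ?_
      by_cases h : s p = t
      · rw [if_pos h]
        refine (Finset.prod_congr rfl fun q _ => ?_).symm
        by_cases hq : q = p
        · subst hq; rw [if_pos rfl, if_pos h]
        · rw [if_neg hq]
      · rw [if_neg h]
        refine (Finset.prod_eq_zero (Finset.mem_univ p) ?_).symm
        rw [if_pos rfl, if_neg h]
    rw [e1]
    have := Finset.prod_univ_sum (fun _ : Fin L => (Finset.univ : Finset (Fin 2)))
      (fun q x => if q = p then (if x = t then mu1 ρ q x else 0) else mu1 ρ q x)
    rw [Fintype.piFinset_univ] at this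
    rw [← this]
    rw [Finset.prod_eq_single p
      (fun q _ hq => by rw [show (∑ x : Fin 2, if q = p then (if x = t then mu1 ρ q x else 0)
          else mu1 ρ q x) = ∑ x : Fin 2, mu1 ρ q x from
        Finset.sum_congr rfl fun x _ => if_neg hq, sum_mu1])
      (fun h => absurd (Finset.mem_univ p) h)]
    rw [show (∑ x : Fin 2, if p = p then (if x = t then mu1 ρ p x else 0) else mu1 ρ p x)
        = ∑ x : Fin 2, if x = t then mu1 ρ p x else 0 from
      Finset.sum_congr rfl fun x _ => if_pos rfl]
    simp

lemma primal_entry_bounds {ρ : Fin L → ℝ} (hρ : ∀ p, 0 ≤ ρ p ∧ ρ p ≤ 1)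
    {M : Matrix (Idx L) (Idx L) ℝ} (hM : PrimalFeasible ρ M) (i j : Idx L) :
    0 ≤ M i j ∧ M i j ≤ 1 := by
  obtain ⟨_, h2, h3, h4⟩ := hM
  obtain ⟨p, t⟩ := i; obtain ⟨q, u⟩ := j
  by_cases h : p = q
  · subst h
    rw [h4]
    split
    · exact ⟨mu1_nonneg hρ p t, mu1_le_one hρ p t⟩
    · exact ⟨le_rfl, zero_le_one⟩
  · refine ⟨h2 p q h t u, ?_⟩
    calc M (p, t) (q, u) ≤ ∑ u' : Fin 2, M (p, t) (q, u') :=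
          Finset.single_le_sum (fun u' _ => h2 p q h t u') (Finset.mem_univ u)
      _ = mu1 ρ p t := h3 p q h t
      _ ≤ 1 := mu1_le_one hρ p t

lemma primal_bddBelow {ρ : Fin L → ℝ} (hρ : ∀ p, 0 ≤ ρ p ∧ ρ p ≤ 1)
    (C : Matrix (Idx L) (Idx L) ℝ) :
    BddBelow (primalValues ρ C) := by
  refine ⟨-(∑ i : Idx L, ∑ j : Idx L, |C i j|), fun x hx => ?_⟩
  obtain ⟨M, hM, rfl⟩ := hx
  have e1 : Matrix.trace (C * M) = ∑ i : Idx L, ∑ j : Idx L, C i j * M j i :=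
    Finset.sum_congr rfl fun i _ => rfl
  rw [e1, ← Finset.sum_neg_distrib]
  refine Finset.sum_le_sum fun i _ => ?_
  rw [← Finset.sum_neg_distrib]
  refine Finset.sum_le_sum fun j _ => ?_
  obtain ⟨hb0, hb1⟩ := primal_entry_bounds hρ hM j i
  rcases le_or_gt 0 (C i j) with hc | hc
  · calc -|C i j| ≤ 0 := neg_nonpos.mpr (abs_nonneg _)
      _ ≤ C i j * M j i := mul_nonneg hc hb0
  · calc -|C i j| = C i j := by rw [abs_of_neg hc, neg_neg]
      _ = C i j * 1 := (mul_one _).symm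
      _ ≤ C i j * M j i := mul_le_mul_of_nonpos_left hb1 hc.le

end Aux

/-- The 3-marginal relaxation is sandwiched between the 2-marginal relaxation and
the exact MMOT value: `E_sdp[ρ] ≤ E_3sdp[ρ] ≤ E_sce[ρ]`. -/
theorem three_marginal_sandwich (L : ℕ) (hL : 3 ≤ L) (ρ : Fin L → ℝ)
    (hρ : ∀ p, 0 ≤ ρ p ∧ ρ p ≤ 1)
    (C : Matrix (Idx L) (Idx L) ℝ) (hCsymm : C.IsSymm)
    (hCdiag : ∀ p : Fin L, ∀ t u : Fin 2, C (p, t) (p, u) = 0) :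
    sInf (primalValues ρ C) ≤ sInf (threeValues ρ C) ∧
    sInf (threeValues ρ C) ≤ sInf (sceValues ρ C) := by
  -- from any μ ∈ Π(ρ) we get a 3-marginal feasible point with the same value
  have hembed : ∀ μ : (Fin L → Fin 2) → ℝ, InPi ρ μ →
      sceCost C μ ∈ threeValues ρ C := by
    intro μ hμ
    refine ⟨Aux.Mmu μ, Aux.Kmu μ, ⟨Aux.Mmu_feasible hμ,
      fun p q r _ _ _ t u w => Aux.Kmu_nonneg hμ.1 p q r t u w,
      fun p q r _ _ _ t u w => Aux.Kmu_perm μ p q r t u w,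
      fun p q r _ _ _ t u => Aux.Kmu_consistent μ p q r t u⟩,
      (Aux.trace_Mmu C hCdiag μ).symm⟩
  have hsub3 : threeValues ρ C ⊆ primalValues ρ C := by
    rintro x ⟨M, K, ⟨hMfeas, _⟩, rfl⟩
    exact ⟨M, hMfeas, rfl⟩
  have hsubsce : sceValues ρ C ⊆ threeValues ρ C := by
    rintro x ⟨μ, hμ, rfl⟩
    exact hembed μ hμ
  have hbddP : BddBelow (primalValues ρ C) := Aux.primal_bddBelow hρ C
  have hbdd3 : BddBelow (threeValues ρ C) := hbddP.mono hsub3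
  have hne3 : (threeValues ρ C).Nonempty :=
    ⟨_, hembed (Aux.prodMu ρ) (Aux.prodMu_inPi hρ)⟩
  have hnesce : (sceValues ρ C).Nonempty :=
    ⟨_, Aux.prodMu ρ, Aux.prodMu_inPi hρ, rfl⟩
  exact ⟨csInf_le_csInf hbddP hne3 hsub3, csInf_le_csInf hbdd3 hnesce hsubsce⟩
end
end
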